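/- Let N, M ≥ 1 be integers, S ⊆ {1,…,N} with |S| ≥ σN, and let φ : S → ℤ/Mℤ be a Freiman homomorphism. Define f : ℤ/4NMℤ → ℂ by f(x + 4Ny) := 1_S(x)·e^{2πi·φ(x)·y/M} for x ∈ {1,…,N}, y ∈ ℤ/Mℤ, and f := 0 otherwise. Then ‖f‖_{U³(ℤ/4NMℤ)} ≥ σ/4. -/

import Mathlib

noncomputable def gowersU3 {G : Type*} [AddCommGroup G] [Fintype G] (f : G → ℂ) : ℝ :=
  ((∑ x : G, ∑ h₁ : G, ∑ h₂ : G, ∑ h₃ : G,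
      f x * (starRingEnd ℂ) (f (x + h₁)) * (starRingEnd ℂ) (f (x + h₂)) *
        (starRingEnd ℂ) (f (x + h₃)) * f (x + h₁ + h₂) * f (x + h₁ + h₃) *
        f (x + h₂ + h₃) * (starRingEnd ℂ) (f (x + h₁ + h₂ + h₃))).re /
    (Fintype.card G : ℝ) ^ 4) ^ ((8 : ℝ)⁻¹)

section Aux

lemma sq_expand {G : Type*} [AddCommGroup G] [Fintype G] (F : G → ℝ) :
    ∑ h : G, ∑ x : G, F x * F (x + h) = (∑ x : G, F x)^2 := by
  rw [Finset.sum_comm]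
  have key : ∀ x : G, ∑ h : G, F (x + h) = ∑ y : G, F y := fun x =>
    Fintype.sum_equiv (Equiv.addLeft x) _ _ (fun h => rfl)
  calc ∑ x : G, ∑ h : G, F x * F (x + h) = ∑ x : G, F x * ∑ h : G, F (x + h) := by
        simp [Finset.mul_sum]
    _ = ∑ x : G, F x * ∑ y : G, F y := by simp only [key]
    _ = (∑ x : G, F x)^2 := by rw [← Finset.sum_mul]; ring

lemma swap4 {G : Type*} [Fintype G] (F : G → G → G → G → ℝ) :
    ∑ x : G, ∑ a : G, ∑ b : G, ∑ c : G, F x a b c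
      = ∑ a : G, ∑ b : G, ∑ c : G, ∑ x : G, F x a b c := by
  rw [Finset.sum_comm]
  exact Finset.sum_congr rfl fun a _ => by
    rw [Finset.sum_comm]
    exact Finset.sum_congr rfl fun b _ => Finset.sum_comm

lemma cs8 {G : Type*} [AddCommGroup G] [Fintype G] (g : G → ℝ) (hg : ∀ v, 0 ≤ g v) :
    (∑ v : G, g v)^8 ≤ (Fintype.card G : ℝ)^4 * ∑ h1 : G, ∑ h2 : G, ∑ h3 : G, ∑ x : G,
      g x * g (x+h1) * g (x+h2) * g (x+h3) * g (x+h1+h2) * g (x+h1+h3) * g (x+h2+h3)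
        * g (x+h1+h2+h3) := by
  set K : ℝ := (Fintype.card G : ℝ) with hK
  have hK0 : 0 ≤ K := by positivity
  set c1 : G → ℝ := fun h1 => ∑ x : G, g x * g (x+h1) with hc1
  set c2 : G → G → ℝ := fun h1 h2 => ∑ x : G, g x * g (x+h1) * g (x+h2) * g (x+h1+h2) with hc2
  have h1c : ∑ h1 : G, c1 h1 = (∑ v : G, g v)^2 := sq_expand g
  have h2c : ∀ h1, ∑ h2 : G, c2 h1 h2 = (c1 h1)^2 := by
    intro h1
    rw [show (c1 h1)^2 = (∑ x : G, (fun x => g x * g (x+h1)) x)^2 from rfl,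
      ← sq_expand (fun x => g x * g (x+h1))]
    refine Finset.sum_congr rfl fun h2 _ => Finset.sum_congr rfl fun x _ => ?_
    show g x * g (x+h1) * g (x+h2) * g (x+h1+h2) = (g x * g (x+h1)) * (g (x+h2) * g (x+h2+h1))
    rw [add_right_comm x h2 h1]; ring
  have h3c : ∀ h1 h2, (∑ h3 : G, ∑ x : G,
      g x * g (x+h1) * g (x+h2) * g (x+h3) * g (x+h1+h2) * g (x+h1+h3) * g (x+h2+h3)
        * g (x+h1+h2+h3)) = (c2 h1 h2)^2 := by
    intro h1 h2
    rw [show (c2 h1 h2)^2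
        = (∑ x : G, (fun x => g x * g (x+h1) * g (x+h2) * g (x+h1+h2)) x)^2 from rfl,
      ← sq_expand (fun x => g x * g (x+h1) * g (x+h2) * g (x+h1+h2))]
    refine Finset.sum_congr rfl fun h3 _ => Finset.sum_congr rfl fun x _ => ?_
    show g x * g (x+h1) * g (x+h2) * g (x+h3) * g (x+h1+h2) * g (x+h1+h3) * g (x+h2+h3)
        * g (x+h1+h2+h3)
      = (g x * g (x+h1) * g (x+h2) * g (x+h1+h2))
        * (g (x+h3) * g (x+h3+h1) * g (x+h3+h2) * g (x+h3+h1+h2))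
    rw [add_right_comm x h3 h1, add_right_comm x h3 h2, add_right_comm (x+h1) h3 h2]
    ring
  have A1 : (∑ h1 : G, c1 h1)^2 ≤ K * ∑ h1 : G, (c1 h1)^2 := by
    simpa [hK] using sq_sum_le_card_mul_sum_sq (s := (Finset.univ : Finset G)) (f := c1)
  have A2 : (∑ h1 : G, ∑ h2 : G, c2 h1 h2)^2 ≤ K^2 * ∑ h1 : G, ∑ h2 : G, (c2 h1 h2)^2 := by
    have := sq_sum_le_card_mul_sum_sq
      (s := (Finset.univ ×ˢ Finset.univ : Finset (G × G))) (f := fun p => c2 p.1 p.2)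
    rw [Finset.sum_product' (f := fun a b => c2 a b),
      Finset.sum_product' (f := fun a b => (c2 a b)^2)] at this
    calc (∑ h1 : G, ∑ h2 : G, c2 h1 h2)^2 ≤ _ := this
      _ = K^2 * ∑ h1 : G, ∑ h2 : G, (c2 h1 h2)^2 := by
          simp only [Finset.card_product, Finset.card_univ, Nat.cast_mul, hK]; ring
  have B1 : (∑ v : G, g v)^4 ≤ K * ∑ h1 : G, ∑ h2 : G, c2 h1 h2 := by
    have h4 : (∑ v : G, g v)^4 = ((∑ v : G, g v)^2)^2 := by ring
    rw [h4, ← h1c]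
    calc (∑ h1 : G, c1 h1)^2 ≤ K * ∑ h1 : G, (c1 h1)^2 := A1
      _ = K * ∑ h1 : G, ∑ h2 : G, c2 h1 h2 := by
          congr 1; exact Finset.sum_congr rfl fun h1 _ => (h2c h1).symm
  calc (∑ v : G, g v)^8 = ((∑ v : G, g v)^4)^2 := by ring
    _ ≤ (K * ∑ h1 : G, ∑ h2 : G, c2 h1 h2)^2 := by
        apply pow_le_pow_left₀ (by positivity) B1
    _ = K^2 * (∑ h1 : G, ∑ h2 : G, c2 h1 h2)^2 := by ring
    _ ≤ K^2 * (K^2 * ∑ h1 : G, ∑ h2 : G, (c2 h1 h2)^2) := by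
        apply mul_le_mul_of_nonneg_left A2 (by positivity)
    _ = K^4 * ∑ h1 : G, ∑ h2 : G, (c2 h1 h2)^2 := by ring
    _ = K^4 * ∑ h1 : G, ∑ h2 : G, ∑ h3 : G, ∑ x : G,
          g x * g (x+h1) * g (x+h2) * g (x+h3) * g (x+h1+h2) * g (x+h1+h3) * g (x+h2+h3)
            * g (x+h1+h2+h3) := by
        congr 1
        exact Finset.sum_congr rfl fun h1 _ => Finset.sum_congr rfl fun h2 _ => (h3c h1 h2).symm

lemma lift_aux (N M : ℕ) (hN : 1 ≤ N) (hM : 1 ≤ M)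
    (a₁ a₂ a₃ a₄ y₁ y₂ y₃ y₄ : ℕ)
    (hb₁ : 1 ≤ a₁) (hB₁ : a₁ ≤ N) (hb₂ : 1 ≤ a₂) (hB₂ : a₂ ≤ N)
    (hb₃ : 1 ≤ a₃) (hB₃ : a₃ ≤ N) (hb₄ : 1 ≤ a₄) (hB₄ : a₄ ≤ N)
    (heq : ((a₁ : ZMod (4*N*M)) + 4*N*(y₁ : ZMod (4*N*M)))
          + ((a₂ : ZMod (4*N*M)) + 4*N*(y₂ : ZMod (4*N*M)))
        = ((a₃ : ZMod (4*N*M)) + 4*N*(y₃ : ZMod (4*N*M)))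
          + ((a₄ : ZMod (4*N*M)) + 4*N*(y₄ : ZMod (4*N*M)))) :
    a₁ + a₂ = a₃ + a₄ ∧ ((y₁ : ZMod M) + (y₂ : ZMod M) = (y₃ : ZMod M) + (y₄ : ZMod M)) := by
  have hcast : ((a₁ + 4*N*y₁ + (a₂ + 4*N*y₂) : ℕ) : ZMod (4*N*M))
      = ((a₃ + 4*N*y₃ + (a₄ + 4*N*y₄) : ℕ) : ZMod (4*N*M)) := by
    push_cast
    linear_combination heq
  rw [ZMod.natCast_eq_natCast_iff] at hcast
  obtain ⟨k, hk⟩ := hcast.dvd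
  have hd : ((a₃ + a₄ : ℕ) : ℤ) - ((a₁ + a₂ : ℕ) : ℤ)
      = 4*N*((y₁ : ℤ) + y₂ - y₃ - y₄ + M*k) := by push_cast at hk ⊢; linarith
  have h0 : ((a₃ + a₄ : ℕ) : ℤ) - ((a₁ + a₂ : ℕ) : ℤ) = 0 := by
    refine Int.eq_zero_of_dvd_of_natAbs_lt_natAbs ⟨_, hd⟩ ?_
    omega
  have ha : a₁ + a₂ = a₃ + a₄ := by omega
  refine ⟨ha, ?_⟩
  have hd0 : (y₁ : ℤ) + y₂ - y₃ - y₄ + M*k = 0 := by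
    have h4N : (4*(N:ℤ)) ≠ 0 := by positivity
    have h5 := hd; rw [h0] at h5
    exact (mul_eq_zero.mp h5.symm).resolve_left h4N
  have hmod : y₁ + y₂ ≡ y₃ + y₄ [MOD M] := (Nat.modEq_iff_dvd).mpr ⟨k, by push_cast; linarith⟩
  have h6 := (ZMod.natCast_eq_natCast_iff _ _ _).mpr hmod
  push_cast at h6
  linear_combination h6

lemma decomp (N M : ℕ) (hN : 1 ≤ N) (hM : 1 ≤ M) (v : ZMod (4*N*M)) :
    ∃ x y : ℕ, 1 ≤ x ∧ x ≤ 4*N ∧ y < M ∧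
      v = (x : ZMod (4*N*M)) + 4*N*(y : ZMod (4*N*M)) := by
  have hL : 0 < 4*N*M := by positivity
  haveI : NeZero (4*N*M) := ⟨by omega⟩
  have hv : ((v.val : ℕ) : ZMod (4*N*M)) = v := ZMod.natCast_rightInverse v
  set n := v.val with hn
  have hnlt : n < 4*N*M := ZMod.val_lt v
  have cast_eq : ∀ x y : ℕ, x + 4*N*y ≡ n [MOD 4*N*M] →
      v = (x : ZMod (4*N*M)) + 4*N*(y : ZMod (4*N*M)) := by
    intro x y h
    have h7 := (ZMod.natCast_eq_natCast_iff _ _ _).mpr h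
    rw [hv] at h7
    rw [← h7]; push_cast; ring
  rcases Nat.eq_zero_or_pos (n % (4*N)) with h0 | hpos
  · have hdvd : 4*N ∣ n := Nat.dvd_of_mod_eq_zero h0
    obtain ⟨q, hq⟩ := hdvd
    have hqM : q < M := by
      by_contra h
      push_neg at h
      have : 4*N*M ≤ 4*N*q := Nat.mul_le_mul_left _ h
      omega
    rcases Nat.eq_zero_or_pos q with hq0 | hq1
    · refine ⟨4*N, M-1, by omega, le_refl _, by omega, cast_eq _ _ ?_⟩
      have h1 : 4*N + 4*N*(M-1) = 4*N*M := by
        have h2 : 4*N*(M-1) = 4*N*M - 4*N*1 := Nat.mul_sub _ _ _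
        have h3 : 4*N ≤ 4*N*M := Nat.le_mul_of_pos_right _ (by omega)
        omega
      rw [h1, hq, hq0, Nat.mul_zero]
      simp [Nat.ModEq]
    · refine ⟨4*N, q-1, by omega, le_refl _, by omega, cast_eq _ _ ?_⟩
      have h1 : 4*N + 4*N*(q-1) = 4*N*q := by
        have h2 : 4*N*(q-1) = 4*N*q - 4*N*1 := Nat.mul_sub _ _ _
        have h3 : 4*N ≤ 4*N*q := Nat.le_mul_of_pos_right _ hq1
        omega
      rw [h1, ← hq]
  · refine ⟨n % (4*N), n / (4*N), hpos, le_of_lt (Nat.mod_lt _ (by omega)), ?_, cast_eq _ _ ?_⟩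
    · apply Nat.div_lt_of_lt_mul; omega
    · rw [Nat.mod_add_div]

def goodV (N M : ℕ) (S : Finset ℕ) (v : ZMod (4*N*M)) : Prop :=
  ∃ a ∈ S, ∃ y, y < M ∧ v = (a : ZMod (4*N*M)) + 4*N*(y : ZMod (4*N*M))

open Classical in
noncomputable def gfun (N M : ℕ) (S : Finset ℕ) (v : ZMod (4*N*M)) : ℝ :=
  if goodV N M S v then 1 else 0

lemma gfun_nonneg (N M : ℕ) (S : Finset ℕ) (v : ZMod (4*N*M)) : 0 ≤ gfun N M S v := by
  unfold gfun; split <;> norm_num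

lemma gfun_one {N M : ℕ} {S : Finset ℕ} {v : ZMod (4*N*M)} (h : goodV N M S v) :
    gfun N M S v = 1 := by unfold gfun; rw [if_pos h]

lemma gfun_zero {N M : ℕ} {S : Finset ℕ} {v : ZMod (4*N*M)} (h : ¬ goodV N M S v) :
    gfun N M S v = 0 := by unfold gfun; rw [if_neg h]

end Aux

theorem stmt14 (N M : ℕ) (hN : 1 ≤ N) (hM : 1 ≤ M) [NeZero (4 * N * M)] (σ : ℝ)
    (S : Finset ℕ) (hS : S ⊆ Finset.Icc 1 N) (hcard : σ * N ≤ (S.card : ℝ))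
    (φ : ℕ → ZMod M)
    (hφ : ∀ x₁ ∈ S, ∀ x₂ ∈ S, ∀ x₃ ∈ S, ∀ x₄ ∈ S,
      x₁ + x₂ = x₃ + x₄ → φ x₁ + φ x₂ = φ x₃ + φ x₄)
    (f : ZMod (4 * N * M) → ℂ)
    (hf : ∀ x y : ℕ, 1 ≤ x → x ≤ 4 * N → y < M →
      f ((x : ZMod (4 * N * M)) + 4 * N * (y : ZMod (4 * N * M))) =
        if x ∈ S then
          Complex.exp (2 * Real.pi * Complex.I * ((φ x).val : ℂ) * (y : ℂ) / (M : ℂ))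
        else 0) :
    σ / 4 ≤ gowersU3 f := by
  classical
  haveI hMne : NeZero M := ⟨by omega⟩
  have hmem : ∀ a ∈ S, 1 ≤ a ∧ a ≤ N := fun a ha => by
    have h := hS ha; rw [Finset.mem_Icc] at h; exact h
  set g : ZMod (4*N*M) → ℝ := gfun N M S with hgdef
  -- f vanishes off good points
  have hfzero : ∀ v, ¬ goodV N M S v → f v = 0 := by
    intro v hv
    obtain ⟨x, y, hx1, hx4, hyM, hvxy⟩ := decomp N M hN hM v
    have hxS : x ∉ S := fun hxs => hv ⟨x, hxs, y, hyM, hvxy⟩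
    rw [hvxy, hf x y hx1 hx4 hyM, if_neg hxS]
  have hconj : ∀ (c y : ℕ), (starRingEnd ℂ)
        (Complex.exp (2 * Real.pi * Complex.I * (c : ℂ) * (y : ℂ) / (M : ℂ)))
      = Complex.exp (-(2 * Real.pi * Complex.I * (c : ℂ) * (y : ℂ) / (M : ℂ))) := by
    intro c y
    rw [← Complex.exp_conj]
    congr 1
    simp only [map_div₀, map_mul, Complex.conj_I, Complex.conj_ofReal, map_natCast, map_ofNat]
    ring
  -- the key termwise identity
  have hterm : ∀ z h₁ h₂ h₃ : ZMod (4*N*M),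
      f z * (starRingEnd ℂ) (f (z + h₁)) * (starRingEnd ℂ) (f (z + h₂)) *
        (starRingEnd ℂ) (f (z + h₃)) * f (z + h₁ + h₂) * f (z + h₁ + h₃) *
        f (z + h₂ + h₃) * (starRingEnd ℂ) (f (z + h₁ + h₂ + h₃))
      = ((g z * g (z + h₁) * g (z + h₂) * g (z + h₃) * g (z + h₁ + h₂) * g (z + h₁ + h₃) *
          g (z + h₂ + h₃) * g (z + h₁ + h₂ + h₃) : ℝ) : ℂ) := by
    intro z h₁ h₂ h₃
    by_cases H0 : goodV N M S z
    case neg => simp [hgdef, hfzero z H0, gfun_zero H0]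
    by_cases H1 : goodV N M S (z + h₁)
    case neg => simp [hgdef, hfzero _ H1, gfun_zero H1]
    by_cases H2 : goodV N M S (z + h₂)
    case neg => simp [hgdef, hfzero _ H2, gfun_zero H2]
    by_cases H3 : goodV N M S (z + h₃)
    case neg => simp [hgdef, hfzero _ H3, gfun_zero H3]
    by_cases H12 : goodV N M S (z + h₁ + h₂)
    case neg => simp [hgdef, hfzero _ H12, gfun_zero H12]
    by_cases H13 : goodV N M S (z + h₁ + h₃)
    case neg => simp [hgdef, hfzero _ H13, gfun_zero H13]
    by_cases H23 : goodV N M S (z + h₂ + h₃)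
    case neg => simp [hgdef, hfzero _ H23, gfun_zero H23]
    by_cases H123 : goodV N M S (z + h₁ + h₂ + h₃)
    case neg => simp [hgdef, hfzero _ H123, gfun_zero H123]
    -- all vertices good
    rw [hgdef, gfun_one H0, gfun_one H1, gfun_one H2, gfun_one H3, gfun_one H12,
      gfun_one H13, gfun_one H23, gfun_one H123]
    obtain ⟨a0, ha0, y0, hy0, hv0⟩ := H0
    obtain ⟨a1, ha1, y1, hy1, hv1⟩ := H1
    obtain ⟨a2, ha2, y2, hy2, hv2⟩ := H2
    obtain ⟨a3, ha3, y3, hy3, hv3⟩ := H3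
    obtain ⟨a12, ha12, y12, hy12, hv12⟩ := H12
    obtain ⟨a13, ha13, y13, hy13, hv13⟩ := H13
    obtain ⟨a23, ha23, y23, hy23, hv23⟩ := H23
    obtain ⟨a123, ha123, y123, hy123, hv123⟩ := H123
    have hb0 := hmem a0 ha0; have hb1 := hmem a1 ha1; have hb2 := hmem a2 ha2
    have hb3 := hmem a3 ha3; have hb12 := hmem a12 ha12; have hb13 := hmem a13 ha13
    have hb23 := hmem a23 ha23; have hb123 := hmem a123 ha123
    have e12 := lift_aux N M hN hM a0 a12 a1 a2 y0 y12 y1 y2 hb0.1 hb0.2 hb12.1 hb12.2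
      hb1.1 hb1.2 hb2.1 hb2.2
      (by rw [← hv0, ← hv12, ← hv1, ← hv2]; ring)
    have e13 := lift_aux N M hN hM a0 a13 a1 a3 y0 y13 y1 y3 hb0.1 hb0.2 hb13.1 hb13.2
      hb1.1 hb1.2 hb3.1 hb3.2
      (by rw [← hv0, ← hv13, ← hv1, ← hv3]; ring)
    have e23 := lift_aux N M hN hM a0 a23 a2 a3 y0 y23 y2 y3 hb0.1 hb0.2 hb23.1 hb23.2
      hb2.1 hb2.2 hb3.1 hb3.2
      (by rw [← hv0, ← hv23, ← hv2, ← hv3]; ring)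
    have e123 := lift_aux N M hN hM a3 a123 a13 a23 y3 y123 y13 y23 hb3.1 hb3.2
      hb123.1 hb123.2 hb13.1 hb13.2 hb23.1 hb23.2
      (by rw [← hv3, ← hv123, ← hv13, ← hv23]; ring)
    have p12 := hφ a0 ha0 a12 ha12 a1 ha1 a2 ha2 e12.1
    have p13 := hφ a0 ha0 a13 ha13 a1 ha1 a3 ha3 e13.1
    have p23 := hφ a0 ha0 a23 ha23 a2 ha2 a3 ha3 e23.1
    have p123 := hφ a3 ha3 a123 ha123 a13 ha13 a23 ha23 e123.1
    have hφ12 : φ a12 = φ a1 + φ a2 - φ a0 := by linear_combination p12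
    have hφ13 : φ a13 = φ a1 + φ a3 - φ a0 := by linear_combination p13
    have hφ23 : φ a23 = φ a2 + φ a3 - φ a0 := by linear_combination p23
    have hφ123 : φ a123 = φ a13 + φ a23 - φ a3 := by linear_combination p123
    have hβ12 : (y12 : ZMod M) = y1 + y2 - y0 := by linear_combination e12.2
    have hβ13 : (y13 : ZMod M) = y1 + y3 - y0 := by linear_combination e13.2
    have hβ23 : (y23 : ZMod M) = y2 + y3 - y0 := by linear_combination e23.2
    have hβ123 : (y123 : ZMod M) = (y13 : ZMod M) + y23 - y3 := by linear_combination e123.2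
    have key : φ a0 * (y0 : ZMod M) - φ a1 * y1 - φ a2 * y2 - φ a3 * y3
        + φ a12 * y12 + φ a13 * y13 + φ a23 * y23 - φ a123 * y123 = 0 := by
      rw [hφ123, hβ123, hφ12, hβ12, hφ13, hβ13, hφ23, hβ23]; ring
    have hdvd : (M : ℤ) ∣ ((φ a0).val * y0 - (φ a1).val * y1 - (φ a2).val * y2
        - (φ a3).val * y3 + (φ a12).val * y12 + (φ a13).val * y13 + (φ a23).val * y23
        - (φ a123).val * y123 : ℤ) := by
      rw [← ZMod.intCast_zmod_eq_zero_iff_dvd]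
      push_cast [ZMod.natCast_val, ZMod.cast_id]
      linear_combination key
    obtain ⟨k, hk⟩ := hdvd
    have hkC : ((φ a0).val : ℂ) * y0 - ((φ a1).val : ℂ) * y1 - ((φ a2).val : ℂ) * y2
        - ((φ a3).val : ℂ) * y3 + ((φ a12).val : ℂ) * y12 + ((φ a13).val : ℂ) * y13
        + ((φ a23).val : ℂ) * y23 - ((φ a123).val : ℂ) * y123 = (M : ℂ) * (k : ℂ) := by
      have := congrArg (fun z : ℤ => (z : ℂ)) hk
      push_cast at this
      linear_combination this
    have hMC : (M : ℂ) ≠ 0 := by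
      simp only [ne_eq, Nat.cast_eq_zero]; omega
    have hx0 : f z = Complex.exp (2 * Real.pi * Complex.I * ((φ a0).val : ℂ) * (y0 : ℂ) / M) := by
      rw [hv0, hf a0 y0 hb0.1 (by omega) hy0, if_pos ha0]
    have hx1 : f (z + h₁)
        = Complex.exp (2 * Real.pi * Complex.I * ((φ a1).val : ℂ) * (y1 : ℂ) / M) := by
      rw [hv1, hf a1 y1 hb1.1 (by omega) hy1, if_pos ha1]
    have hx2 : f (z + h₂)
        = Complex.exp (2 * Real.pi * Complex.I * ((φ a2).val : ℂ) * (y2 : ℂ) / M) := by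
      rw [hv2, hf a2 y2 hb2.1 (by omega) hy2, if_pos ha2]
    have hx3 : f (z + h₃)
        = Complex.exp (2 * Real.pi * Complex.I * ((φ a3).val : ℂ) * (y3 : ℂ) / M) := by
      rw [hv3, hf a3 y3 hb3.1 (by omega) hy3, if_pos ha3]
    have hx12 : f (z + h₁ + h₂)
        = Complex.exp (2 * Real.pi * Complex.I * ((φ a12).val : ℂ) * (y12 : ℂ) / M) := by
      rw [hv12, hf a12 y12 hb12.1 (by omega) hy12, if_pos ha12]
    have hx13 : f (z + h₁ + h₃)
        = Complex.exp (2 * Real.pi * Complex.I * ((φ a13).val : ℂ) * (y13 : ℂ) / M) := by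
      rw [hv13, hf a13 y13 hb13.1 (by omega) hy13, if_pos ha13]
    have hx23 : f (z + h₂ + h₃)
        = Complex.exp (2 * Real.pi * Complex.I * ((φ a23).val : ℂ) * (y23 : ℂ) / M) := by
      rw [hv23, hf a23 y23 hb23.1 (by omega) hy23, if_pos ha23]
    have hx123 : f (z + h₁ + h₂ + h₃)
        = Complex.exp (2 * Real.pi * Complex.I * ((φ a123).val : ℂ) * (y123 : ℂ) / M) := by
      rw [hv123, hf a123 y123 hb123.1 (by omega) hy123, if_pos ha123]
    rw [hx0, hx1, hx2, hx3, hx12, hx13, hx23, hx123, hconj, hconj, hconj, hconj,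
      ← Complex.exp_add, ← Complex.exp_add, ← Complex.exp_add, ← Complex.exp_add,
      ← Complex.exp_add, ← Complex.exp_add, ← Complex.exp_add]
    have hexp : (2 * (Real.pi : ℂ) * Complex.I * ((φ a0).val : ℂ) * (y0 : ℂ) / M +
        -(2 * (Real.pi : ℂ) * Complex.I * ((φ a1).val : ℂ) * (y1 : ℂ) / M) +
        -(2 * (Real.pi : ℂ) * Complex.I * ((φ a2).val : ℂ) * (y2 : ℂ) / M) +
        -(2 * (Real.pi : ℂ) * Complex.I * ((φ a3).val : ℂ) * (y3 : ℂ) / M) +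
        2 * (Real.pi : ℂ) * Complex.I * ((φ a12).val : ℂ) * (y12 : ℂ) / M +
        2 * (Real.pi : ℂ) * Complex.I * ((φ a13).val : ℂ) * (y13 : ℂ) / M +
        2 * (Real.pi : ℂ) * Complex.I * ((φ a23).val : ℂ) * (y23 : ℂ) / M +
        -(2 * (Real.pi : ℂ) * Complex.I * ((φ a123).val : ℂ) * (y123 : ℂ) / M))
        = (k : ℂ) * (2 * (Real.pi : ℂ) * Complex.I) := by
      rw [show (2 * (Real.pi : ℂ) * Complex.I * ((φ a0).val : ℂ) * (y0 : ℂ) / M +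
        -(2 * (Real.pi : ℂ) * Complex.I * ((φ a1).val : ℂ) * (y1 : ℂ) / M) +
        -(2 * (Real.pi : ℂ) * Complex.I * ((φ a2).val : ℂ) * (y2 : ℂ) / M) +
        -(2 * (Real.pi : ℂ) * Complex.I * ((φ a3).val : ℂ) * (y3 : ℂ) / M) +
        2 * (Real.pi : ℂ) * Complex.I * ((φ a12).val : ℂ) * (y12 : ℂ) / M +
        2 * (Real.pi : ℂ) * Complex.I * ((φ a13).val : ℂ) * (y13 : ℂ) / M +
        2 * (Real.pi : ℂ) * Complex.I * ((φ a23).val : ℂ) * (y23 : ℂ) / M +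
        -(2 * (Real.pi : ℂ) * Complex.I * ((φ a123).val : ℂ) * (y123 : ℂ) / M))
        = 2 * (Real.pi : ℂ) * Complex.I *
          ((((φ a0).val : ℂ) * y0 - ((φ a1).val : ℂ) * y1 - ((φ a2).val : ℂ) * y2
            - ((φ a3).val : ℂ) * y3 + ((φ a12).val : ℂ) * y12 + ((φ a13).val : ℂ) * y13
            + ((φ a23).val : ℂ) * y23 - ((φ a123).val : ℂ) * y123) / M) from by ring,
        hkC, mul_div_cancel_left₀ _ hMC]
      ring
    rw [hexp]
    rw [Complex.exp_int_mul_two_pi_mul_I k]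
    norm_num
  -- sum identity
  have hbig : (∑ x : ZMod (4*N*M), ∑ h₁ : ZMod (4*N*M), ∑ h₂ : ZMod (4*N*M),
        ∑ h₃ : ZMod (4*N*M),
        f x * (starRingEnd ℂ) (f (x + h₁)) * (starRingEnd ℂ) (f (x + h₂)) *
          (starRingEnd ℂ) (f (x + h₃)) * f (x + h₁ + h₂) * f (x + h₁ + h₃) *
          f (x + h₂ + h₃) * (starRingEnd ℂ) (f (x + h₁ + h₂ + h₃))).re
      = ∑ h₁ : ZMod (4*N*M), ∑ h₂ : ZMod (4*N*M), ∑ h₃ : ZMod (4*N*M), ∑ x : ZMod (4*N*M),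
          g x * g (x + h₁) * g (x + h₂) * g (x + h₃) * g (x + h₁ + h₂) * g (x + h₁ + h₃) *
          g (x + h₂ + h₃) * g (x + h₁ + h₂ + h₃) := by
    simp only [hterm, Complex.re_sum, Complex.ofReal_re]
    exact swap4 _
  -- counting
  have hg0 : ∀ v, 0 ≤ g v := fun v => gfun_nonneg N M S v
  have hcount : ((S.card * M : ℕ) : ℝ) ≤ ∑ v : ZMod (4*N*M), g v := by
    have hsum : ∑ v : ZMod (4*N*M), g v
        = (((Finset.univ : Finset (ZMod (4*N*M))).filter (goodV N M S)).card : ℝ) := by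
      rw [hgdef]; unfold gfun
      rw [Finset.sum_boole]
    rw [hsum]
    have hle : S.card * M ≤ ((Finset.univ : Finset (ZMod (4*N*M))).filter (goodV N M S)).card := by
      have hmain := Finset.card_le_card_of_injOn
        (f := fun p : ℕ × ℕ => ((p.1 : ZMod (4*N*M)) + 4*N*(p.2 : ZMod (4*N*M))))
        (s := S ×ˢ Finset.range M)
        (t := (Finset.univ : Finset (ZMod (4*N*M))).filter (goodV N M S)) ?_ ?_
      · simpa [Finset.card_product] using hmain
      · rintro ⟨a, y⟩ hp
        rw [Finset.mem_coe, Finset.mem_product, Finset.mem_range] at hp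
        exact Finset.mem_filter.mpr ⟨Finset.mem_univ _, ⟨a, hp.1, y, hp.2, rfl⟩⟩
      · rintro ⟨a, y⟩ hp ⟨a', y'⟩ hq hpq
        simp only [Finset.coe_product, Set.mem_prod, Finset.mem_coe, Finset.coe_range,
          Set.mem_Iio] at hp hq
        have hpq' : (a : ZMod (4*N*M)) + 4*N*(y : ZMod (4*N*M))
            = (a' : ZMod (4*N*M)) + 4*N*(y' : ZMod (4*N*M)) := hpq
        have hb := hmem a hp.1
        have hb' := hmem a' hq.1
        have hla := lift_aux N M hN hM a 1 a' 1 y 0 y' 0 hb.1 hb.2 le_rfl hN hb'.1 hb'.2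
          le_rfl hN (by push_cast; linear_combination hpq')
        have ha : a = a' := by omega
        have hy' : (y : ZMod M) = (y' : ZMod M) := by
          have := hla.2; push_cast at this; linear_combination this
        have hy : y = y' := by
          have hmod := (ZMod.natCast_eq_natCast_iff _ _ _).mp hy'
          unfold Nat.ModEq at hmod
          rw [Nat.mod_eq_of_lt hp.2, Nat.mod_eq_of_lt hq.2] at hmod
          exact hmod
        simp [ha, hy]
    exact_mod_cast hle
  -- final assembly
  have hR0 : (0:ℝ) ≤ ∑ h₁ : ZMod (4*N*M), ∑ h₂ : ZMod (4*N*M), ∑ h₃ : ZMod (4*N*M),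
      ∑ x : ZMod (4*N*M),
      g x * g (x + h₁) * g (x + h₂) * g (x + h₃) * g (x + h₁ + h₂) * g (x + h₁ + h₃) *
        g (x + h₂ + h₃) * g (x + h₁ + h₂ + h₃) := by
    refine Finset.sum_nonneg fun _ _ => Finset.sum_nonneg fun _ _ =>
      Finset.sum_nonneg fun _ _ => Finset.sum_nonneg fun _ _ => ?_
    exact mul_nonneg (mul_nonneg (mul_nonneg (mul_nonneg (mul_nonneg (mul_nonneg
      (mul_nonneg (hg0 _) (hg0 _)) (hg0 _)) (hg0 _)) (hg0 _)) (hg0 _)) (hg0 _)) (hg0 _)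
  have hcardG : (Fintype.card (ZMod (4*N*M)) : ℝ) = 4*(N:ℝ)*(M:ℝ) := by
    rw [ZMod.card]; push_cast; ring
  unfold gowersU3
  rw [hbig, hcardG]
  set R : ℝ := ∑ h₁ : ZMod (4*N*M), ∑ h₂ : ZMod (4*N*M), ∑ h₃ : ZMod (4*N*M),
      ∑ x : ZMod (4*N*M),
      g x * g (x + h₁) * g (x + h₂) * g (x + h₃) * g (x + h₁ + h₂) * g (x + h₁ + h₃) *
        g (x + h₂ + h₃) * g (x + h₁ + h₂ + h₃) with hRdef
  have hN0 : (0:ℝ) < N := by exact_mod_cast hN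
  have hM0 : (0:ℝ) < M := by exact_mod_cast hM
  by_cases hsig : σ ≤ 0
  · have hpos : (0:ℝ) ≤ (R / (4*(N:ℝ)*M)^4)^((8:ℝ)⁻¹) :=
      Real.rpow_nonneg (div_nonneg hR0 (by positivity)) _
    linarith
  · push_neg at hsig
    have hA : σ*(N:ℝ)*M ≤ ∑ v : ZMod (4*N*M), g v := by
      refine le_trans ?_ hcount
      push_cast
      calc σ*(N:ℝ)*M = (σ*N)*M := by ring
        _ ≤ (S.card : ℝ)*M := mul_le_mul_of_nonneg_right hcard (le_of_lt hM0)
    have hcs := cs8 g hg0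
    rw [hcardG, ← hRdef] at hcs
    have h8 : (σ*(N:ℝ)*M)^8 ≤ (4*(N:ℝ)*M)^4 * R :=
      le_trans (pow_le_pow_left₀ (by positivity) hA 8) hcs
    have hfin : (σ/4)^8 ≤ R / (4*(N:ℝ)*M)^4 := by
      rw [le_div_iff₀ (by positivity)]
      refine le_of_mul_le_mul_right ?_ (show (0:ℝ) < (4*(N:ℝ)*M)^4 by positivity)
      calc ((σ/4)^8 * (4*(N:ℝ)*M)^4) * (4*(N:ℝ)*M)^4 = (σ*(N:ℝ)*M)^8 := by ring
        _ ≤ (4*(N:ℝ)*M)^4 * R := h8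
        _ = R * (4*(N:ℝ)*M)^4 := by ring
    rw [show ((8:ℝ)⁻¹) = (((8:ℕ):ℝ))⁻¹ by norm_num]
    calc σ/4 = ((σ/4)^(8:ℕ))^((((8:ℕ)):ℝ))⁻¹ :=
        (Real.pow_rpow_inv_natCast (by linarith) (by norm_num)).symm
      _ ≤ (R / (4*(N:ℝ)*M)^4)^((((8:ℕ)):ℝ))⁻¹ :=
        Real.rpow_le_rpow (by positivity) hfin (by norm_num)
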